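/- Let m ≥ 1, let ⟪·,·⟫ be a nondegenerate symmetric bilinear form on ℝ^m, let B ⊆ ℝ^m be a convex body with normal cone N and recession cone R, and suppose v₀ is a nonzero vector with v₀ ∈ (int N) ∩ R. Then the function f : ∂B → ℝ, f(p) = ⟪p, v₀⟫, is proper and bounded below: for every a ∈ ℝ the sublevel set {p ∈ ∂B : ⟪p, v₀⟫ ≤ a} is compact, and there exists c ∈ ℝ with ⟪p, v₀⟫ ≥ c for all p ∈ B. -/

import Mathlib

open Set

/-- The normal cone of a convex body `B` with respect to a bilinear form `form`. -/
def normalCone {m : ℕ}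
    (form : EuclideanSpace ℝ (Fin m) →ₗ[ℝ] EuclideanSpace ℝ (Fin m) →ₗ[ℝ] ℝ)
    (B : Set (EuclideanSpace ℝ (Fin m))) : Set (EuclideanSpace ℝ (Fin m)) :=
  {w | w ≠ 0 ∧ ∃ p ∈ frontier B, ∀ x ∈ B, 0 ≤ form (x - p) w}

/-- The recession cone of a convex body `B`. -/
def recessionCone {m : ℕ} (B : Set (EuclideanSpace ℝ (Fin m))) :
    Set (EuclideanSpace ℝ (Fin m)) :=
  {v | ∀ x ∈ B, ∀ t : ℝ, 0 ≤ t → x + t • v ∈ B}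

theorem stmt_16 {m : ℕ} (hm : 1 ≤ m)
    (form : EuclideanSpace ℝ (Fin m) →ₗ[ℝ] EuclideanSpace ℝ (Fin m) →ₗ[ℝ] ℝ)
    (hsymm : ∀ x y, form x y = form y x)
    (hnd : ∀ x, (∀ y, form x y = 0) → x = 0)
    (B : Set (EuclideanSpace ℝ (Fin m)))
    (hconv : Convex ℝ B) (hclosed : IsClosed B) (hint : (interior B).Nonempty)
    (v₀ : EuclideanSpace ℝ (Fin m)) (hv₀ : v₀ ≠ 0)
    (hv₀NR : v₀ ∈ interior (normalCone form B) ∩ recessionCone B) :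
    (∀ a : ℝ, IsCompact {p | p ∈ frontier B ∧ form p v₀ ≤ a}) ∧
    (∃ c : ℝ, ∀ p ∈ B, c ≤ form p v₀) := by
  classical
  obtain ⟨hv₀N, hv₀R⟩ := hv₀NR
  have hcont : Continuous fun p : EuclideanSpace ℝ (Fin m) => form p v₀ :=
    (form.flip v₀).continuous_of_finiteDimensional
  -- Part 2
  have hv₀N' : v₀ ∈ normalCone form B := interior_subset hv₀N
  obtain ⟨-, p₀, hp₀, hp₀min⟩ := hv₀N'
  have part2 : ∀ p ∈ B, form p₀ v₀ ≤ form p v₀ := by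
    intro p hp
    have h := hp₀min p hp
    rw [map_sub] at h
    simp only [LinearMap.sub_apply] at h
    linarith
  -- Lemma A : recession directions pair nonnegatively with normal vectors
  have lemA : ∀ v ∈ recessionCone B, ∀ w ∈ normalCone form B, 0 ≤ form v w := by
    intro v hv w hw
    obtain ⟨-, p, hp, hmin⟩ := hw
    have hpB : p ∈ B := hclosed.frontier_subset hp
    have hx : p + (1:ℝ) • v ∈ B := hv p hpB 1 zero_le_one
    have h := hmin _ hx
    simpa using h
  -- a ball around v₀ inside the normal cone
  obtain ⟨ε, hε, hball⟩ :
      ∃ ε > 0, Metric.ball v₀ ε ⊆ normalCone form B :=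
    Metric.mem_nhds_iff.mp (mem_interior_iff_mem_nhds.mp hv₀N)
  -- Lemma B : nonzero recession directions pair strictly positively with v₀
  have lemB : ∀ v ∈ recessionCone B, v ≠ 0 → 0 < form v v₀ := by
    intro v hv hvne
    obtain ⟨y, hy⟩ : ∃ y, 0 < form v y := by
      obtain ⟨y, hy⟩ : ∃ y, form v y ≠ 0 := by
        by_contra h; push_neg at h
        exact hvne (hnd v h)
      rcases hy.lt_or_gt with h | h
      · exact ⟨-y, by simpa using h⟩
      · exact ⟨y, h⟩
    have hyne : y ≠ 0 := by rintro rfl; simp at hy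
    have hny : 0 < ‖y‖ := norm_pos_iff.mpr hyne
    set z : EuclideanSpace ℝ (Fin m) := (-(ε / (2 * ‖y‖))) • y with hz
    have hzmem : v₀ + z ∈ Metric.ball v₀ ε := by
      have : dist (v₀ + z) v₀ = ‖z‖ := by
        rw [dist_eq_norm]; congr 1; abel
      rw [Metric.mem_ball, this, hz, norm_smul]
      rw [norm_neg, Real.norm_eq_abs, abs_of_nonneg (by positivity)]
      have h2 : ε / (2 * ‖y‖) * ‖y‖ = ε / 2 := by field_simp
      rw [h2]; linarith
    have hN := hball hzmem
    have h0 := lemA v hv _ hN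
    have hlin : form v (v₀ + z) = form v v₀ - ε / (2 * ‖y‖) * form v y := by
      rw [map_add, hz, map_smul]
      simp [smul_eq_mul]; ring
    rw [hlin] at h0
    have hpos : 0 < ε / (2 * ‖y‖) * form v y := by positivity
    linarith
  refine ⟨?_, form p₀ v₀, part2⟩
  intro a
  set S := {p : EuclideanSpace ℝ (Fin m) | p ∈ frontier B ∧ form p v₀ ≤ a} with hS
  have hSclosed : IsClosed S :=
    isClosed_frontier.inter (isClosed_le hcont continuous_const)
  refine Metric.isCompact_of_isClosed_isBounded hSclosed ?_
  by_contra hub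
  rw [isBounded_iff_forall_norm_le] at hub
  push_neg at hub
  choose p hpS hpn using hub
  set q : ℕ → EuclideanSpace ℝ (Fin m) := fun n => p n with hq
  have hqn : ∀ n : ℕ, (n : ℝ) < ‖q n‖ := fun n => hpn n
  have hqpos : ∀ n : ℕ, 0 < ‖q n‖ := fun n => lt_of_le_of_lt (Nat.cast_nonneg n) (hqn n)
  have hqB : ∀ n, q n ∈ B := fun n => hclosed.frontier_subset (hpS (n : ℝ)).1
  have hqa : ∀ n, form (q n) v₀ ≤ a := fun n => (hpS (n : ℝ)).2
  set u : ℕ → EuclideanSpace ℝ (Fin m) := fun n => ‖q n‖⁻¹ • q n with hu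
  have humem : ∀ n, u n ∈ Metric.sphere (0 : EuclideanSpace ℝ (Fin m)) 1 := by
    intro n
    rw [mem_sphere_zero_iff_norm, hu]
    rw [norm_smul, Real.norm_eq_abs, abs_of_nonneg (by positivity)]
    exact inv_mul_cancel₀ (ne_of_gt (hqpos n))
  obtain ⟨x, hxs, φ, hφ, hconv'⟩ :=
    (isCompact_sphere (0 : EuclideanSpace ℝ (Fin m)) 1).tendsto_subseq humem
  have hxn : ‖x‖ = 1 := mem_sphere_zero_iff_norm.mp hxs
  have hxne : x ≠ 0 := by
    intro h; rw [h, norm_zero] at hxn; exact one_ne_zero hxn.symm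
  -- norms along the subsequence go to infinity
  have hqtop : Filter.Tendsto (fun n => ‖q (φ n)‖) Filter.atTop Filter.atTop := by
    have h1 : Filter.Tendsto (fun n : ℕ => (n : ℝ)) Filter.atTop Filter.atTop :=
      tendsto_natCast_atTop_atTop
    refine Filter.tendsto_atTop_mono (fun n => ?_) h1
    calc (n : ℝ) ≤ (φ n : ℝ) := by exact_mod_cast hφ.le_apply
    _ ≤ ‖q (φ n)‖ := (hqn (φ n)).le
  -- x is a recession direction
  have hxR : x ∈ recessionCone B := by
    intro w hw t ht
    have hr0 : Filter.Tendsto (fun n => t / ‖q (φ n)‖) Filter.atTop (nhds 0) :=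
      Filter.Tendsto.div_atTop tendsto_const_nhds hqtop
    have hfn : Filter.Tendsto
        (fun n => (1 - t / ‖q (φ n)‖) • w + t • u (φ n)) Filter.atTop
        (nhds (w + t • x)) := by
      have h1 : Filter.Tendsto (fun n => (1 - t / ‖q (φ n)‖) • w)
          Filter.atTop (nhds ((1 - 0 : ℝ) • w)) :=
        (tendsto_const_nhds.sub hr0).smul tendsto_const_nhds
      have h2 : Filter.Tendsto (fun n => t • u (φ n)) Filter.atTop (nhds (t • x)) :=
        tendsto_const_nhds.smul hconv'
      have := h1.add h2
      simpa using this
    refine hclosed.mem_of_tendsto hfn ?_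
    have hev : ∀ᶠ n in Filter.atTop, t ≤ ‖q (φ n)‖ :=
      hqtop.eventually_ge_atTop t
    filter_upwards [hev] with n hn
    have hs0 : 0 ≤ t / ‖q (φ n)‖ := by positivity
    have hs1 : t / ‖q (φ n)‖ ≤ 1 := by
      rw [div_le_one (hqpos (φ n))]; exact hn
    have hcomb := hconv hw (hqB (φ n)) (by linarith : (0:ℝ) ≤ 1 - t / ‖q (φ n)‖) hs0
      (by ring)
    have heq : (1 - t / ‖q (φ n)‖) • w + (t / ‖q (φ n)‖) • q (φ n)
        = (1 - t / ‖q (φ n)‖) • w + t • u (φ n) := by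
      congr 1
      rw [hu, smul_smul, div_eq_mul_inv]
    rw [heq] at hcomb
    exact hcomb
  -- form x v₀ ≤ 0
  have hlim : Filter.Tendsto (fun n => form (u (φ n)) v₀) Filter.atTop
      (nhds (form x v₀)) := (hcont.tendsto x).comp hconv'
  have hbound : Filter.Tendsto (fun n => a / ‖q (φ n)‖) Filter.atTop (nhds 0) :=
    Filter.Tendsto.div_atTop tendsto_const_nhds hqtop
  have hle : form x v₀ ≤ 0 := by
    refine le_of_tendsto_of_tendsto' hlim hbound ?_
    intro n
    have : form (u (φ n)) v₀ = ‖q (φ n)‖⁻¹ * form (q (φ n)) v₀ := by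
      rw [hu, map_smul]; simp [smul_eq_mul]
    rw [this, div_eq_inv_mul]
    exact mul_le_mul_of_nonneg_left (hqa (φ n)) (le_of_lt (inv_pos.mpr (hqpos (φ n))))
  exact absurd (lemB x hxR hxne) (not_lt.mpr hle)
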